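/- Fix κ > 0 and u₀ > 0, and let δ > 0. Let u = u(·; u₀) and u_δ = u(·; u₀ + δ) be solutions of u' = v/√(1+v²), v' = κu with initial values u₀ and u₀ + δ respectively (and v(0) = 0 in both cases). Then u_δ(r) - δ > u(r) for all r ≠ 0. -/

import Mathlib

lemma Fmono : StrictMono (fun x : ℝ => x / Real.sqrt (1 + x ^ 2)) := by
  intro x y hxy
  have hsx : 0 < Real.sqrt (1 + x ^ 2) := Real.sqrt_pos.mpr (by positivity)
  have hsy : 0 < Real.sqrt (1 + y ^ 2) := Real.sqrt_pos.mpr (by positivity)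
  have hx2 : Real.sqrt (1 + x ^ 2) ^ 2 = 1 + x ^ 2 := Real.sq_sqrt (by positivity)
  have hy2 : Real.sqrt (1 + y ^ 2) ^ 2 = 1 + y ^ 2 := Real.sq_sqrt (by positivity)
  simp only
  rw [div_lt_div_iff₀ hsx hsy]
  rcases le_or_gt 0 x with hx | hx
  · have hy : 0 < y := lt_of_le_of_lt hx hxy
    nlinarith [mul_pos hy hsx, mul_nonneg hx hsy.le]
  · rcases le_or_gt 0 y with hy | hy
    · have : x * Real.sqrt (1 + y ^ 2) < 0 := mul_neg_of_neg_of_pos hx hsy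
      nlinarith [mul_nonneg hy hsx.le]
    · nlinarith [mul_neg_of_neg_of_pos hx hsy, mul_neg_of_neg_of_pos hy hsx]

lemma aux_pos (κ δ : ℝ) (hκ : 0 < κ) (hδ : 0 < δ)
    (u v uδ vδ : ℝ → ℝ)
    (hu : ∀ r : ℝ, HasDerivAt u (v r / Real.sqrt (1 + v r ^ 2)) r)
    (hv : ∀ r : ℝ, HasDerivAt v (κ * u r) r)
    (hv0 : v 0 = 0)
    (huδ : ∀ r : ℝ, HasDerivAt uδ (vδ r / Real.sqrt (1 + vδ r ^ 2)) r)
    (hvδ : ∀ r : ℝ, HasDerivAt vδ (κ * uδ r) r)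
    (hvδ0 : vδ 0 = 0) (hW0 : uδ 0 - u 0 = δ) :
    ∀ r : ℝ, 0 < r → uδ r - u r > δ := by
  set F : ℝ → ℝ := fun x => x / Real.sqrt (1 + x ^ 2) with hF
  set W : ℝ → ℝ := fun r => uδ r - u r with hWdef
  set Z : ℝ → ℝ := fun r => vδ r - v r with hZdef
  have hW : ∀ r : ℝ, HasDerivAt W (F (vδ r) - F (v r)) r := fun r => (huδ r).sub (hu r)
  have hZ : ∀ r : ℝ, HasDerivAt Z (κ * W r) r := fun r => by
    have h := (hvδ r).sub (hv r); rw [← mul_sub] at h; exact h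
  have hWc : Continuous W := by
    apply continuous_iff_continuousAt.mpr
    exact fun r => (hW r).continuousAt
  have hZc : Continuous Z := by
    apply continuous_iff_continuousAt.mpr
    exact fun r => (hZ r).continuousAt
  have hZ0 : Z 0 = 0 := by simp [Z, hv0, hvδ0]
  -- Step 1: W ≥ 0 on [0, ∞)
  have hWnn : ∀ r : ℝ, 0 ≤ r → 0 ≤ W r := by
    by_contra h
    push_neg at h
    obtain ⟨r₀, hr₀, hWr₀⟩ := h
    set C : Set ℝ := {r | 0 ≤ r ∧ W r ≤ 0} with hC
    have hCc : IsClosed C :=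
      (isClosed_le continuous_const continuous_id).inter (isClosed_le hWc continuous_const)
    have hCne : C.Nonempty := ⟨r₀, hr₀, hWr₀.le⟩
    have hCbdd : BddBelow C := ⟨0, fun x hx => hx.1⟩
    set t := sInf C with ht
    have htC : t ∈ C := hCc.csInf_mem hCne hCbdd
    have htnn : 0 ≤ t := htC.1
    have hWtle : W t ≤ 0 := htC.2
    have hpos : ∀ s : ℝ, 0 ≤ s → s < t → 0 < W s := by
      intro s hs hst
      by_contra hle
      push_neg at hle
      exact absurd (csInf_le hCbdd ⟨hs, hle⟩) (not_le.mpr hst)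
    -- Z is monotone on [0,t]
    have hZmono : MonotoneOn Z (Set.Icc 0 t) := by
      apply monotoneOn_of_deriv_nonneg (convex_Icc 0 t) hZc.continuousOn
        (fun s _ => ((hZ s).differentiableAt).differentiableWithinAt)
      intro s hs
      rw [interior_Icc] at hs
      rw [(hZ s).deriv]
      exact mul_nonneg hκ.le (hpos s hs.1.le hs.2).le
    have hZnn : ∀ s ∈ Set.Icc (0:ℝ) t, 0 ≤ Z s := by
      intro s hs
      have := hZmono (Set.left_mem_Icc.mpr htnn) hs hs.1
      rwa [hZ0] at this
    have hWmono : MonotoneOn W (Set.Icc 0 t) := by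
      apply monotoneOn_of_deriv_nonneg (convex_Icc 0 t) hWc.continuousOn
        (fun s _ => ((hW s).differentiableAt).differentiableWithinAt)
      intro s hs
      rw [interior_Icc] at hs
      rw [(hW s).deriv]
      have hvle : v s ≤ vδ s := by
        have := hZnn s ⟨hs.1.le, hs.2.le⟩
        simpa [Z, sub_nonneg] using this
      exact sub_nonneg.mpr (Fmono.monotone hvle)
    have : δ ≤ W t := by
      have := hWmono (Set.left_mem_Icc.mpr htnn) (Set.right_mem_Icc.mpr htnn) htnn
      rwa [show W 0 = δ from hW0] at this
    linarith
  -- Step 2: Z ≥ 0 on [0,∞)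
  have hZmono : MonotoneOn Z (Set.Ici 0) := by
    apply monotoneOn_of_deriv_nonneg (convex_Ici 0) hZc.continuousOn
      (fun s _ => ((hZ s).differentiableAt).differentiableWithinAt)
    intro s hs
    rw [interior_Ici] at hs
    rw [(hZ s).deriv]
    exact mul_nonneg hκ.le (hWnn s (le_of_lt hs))
  have hZnn : ∀ s : ℝ, 0 ≤ s → 0 ≤ Z s := by
    intro s hs
    have := hZmono Set.self_mem_Ici hs hs
    rwa [hZ0] at this
  -- Step 3: W ≥ δ on [0,∞)
  have hWmono : MonotoneOn W (Set.Ici 0) := by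
    apply monotoneOn_of_deriv_nonneg (convex_Ici 0) hWc.continuousOn
      (fun s _ => ((hW s).differentiableAt).differentiableWithinAt)
    intro s hs
    rw [interior_Ici] at hs
    rw [(hW s).deriv]
    have hvle : v s ≤ vδ s := by
      have := hZnn s hs.le
      simpa [Z, sub_nonneg] using this
    exact sub_nonneg.mpr (Fmono.monotone hvle)
  have hWδ : ∀ s : ℝ, 0 ≤ s → δ ≤ W s := by
    intro s hs
    have := hWmono Set.self_mem_Ici hs hs
    rwa [show W 0 = δ from hW0] at this
  -- Step 4: Z > 0 on (0,∞)
  have hZstrict : StrictMonoOn Z (Set.Ici 0) := by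
    apply strictMonoOn_of_deriv_pos (convex_Ici 0) hZc.continuousOn
    intro s hs
    rw [interior_Ici] at hs
    rw [(hZ s).deriv]
    exact mul_pos hκ (lt_of_lt_of_le hδ (hWδ s hs.le))
  have hZpos : ∀ s : ℝ, 0 < s → 0 < Z s := by
    intro s hs
    have := hZstrict Set.self_mem_Ici (le_of_lt hs) hs
    rwa [hZ0] at this
  -- Step 5: W strictly monotone on [0,∞)
  have hWstrict : StrictMonoOn W (Set.Ici 0) := by
    apply strictMonoOn_of_deriv_pos (convex_Ici 0) hWc.continuousOn
    intro s hs
    rw [interior_Ici] at hs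
    rw [(hW s).deriv]
    have hvlt : v s < vδ s := by
      have := hZpos s hs
      simpa [Z, sub_pos] using this
    exact sub_pos.mpr (Fmono hvlt)
  intro r hr
  have := hWstrict Set.self_mem_Ici (le_of_lt hr) hr
  rw [show W 0 = δ from hW0] at this
  exact this

theorem stmt_11 (κ u₀ δ : ℝ) (hκ : 0 < κ) (hu₀ : 0 < u₀) (hδ : 0 < δ)
    (u v uδ vδ : ℝ → ℝ)
    (hu : ∀ r : ℝ, HasDerivAt u (v r / Real.sqrt (1 + v r ^ 2)) r)
    (hv : ∀ r : ℝ, HasDerivAt v (κ * u r) r)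
    (hu0 : u 0 = u₀) (hv0 : v 0 = 0)
    (huδ : ∀ r : ℝ, HasDerivAt uδ (vδ r / Real.sqrt (1 + vδ r ^ 2)) r)
    (hvδ : ∀ r : ℝ, HasDerivAt vδ (κ * uδ r) r)
    (huδ0 : uδ 0 = u₀ + δ) (hvδ0 : vδ 0 = 0) :
    ∀ r : ℝ, r ≠ 0 → uδ r - δ > u r := by
  have hW0 : uδ 0 - u 0 = δ := by rw [hu0, huδ0]; ring
  intro r hr
  rcases lt_or_gt_of_ne hr with hneg | hpos
  · -- reflect
    have key := aux_pos κ δ hκ hδ (fun s => u (-s)) (fun s => -v (-s))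
      (fun s => uδ (-s)) (fun s => -vδ (-s))
      (fun s => by
        have h := HasDerivAt.comp s (hu (-s)) (hasDerivAt_neg s)
        simpa [Function.comp_def, neg_div, neg_sq] using h)
      (fun s => by
        have h := (HasDerivAt.comp s (hv (-s)) (hasDerivAt_neg s)).neg
        simpa [Function.comp_def, Pi.neg_def] using h)
      (by simp [hv0])
      (fun s => by
        have h := HasDerivAt.comp s (huδ (-s)) (hasDerivAt_neg s)
        simpa [Function.comp_def, neg_div, neg_sq] using h)
      (fun s => by
        have h := (HasDerivAt.comp s (hvδ (-s)) (hasDerivAt_neg s)).neg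
        simpa [Function.comp_def, Pi.neg_def] using h)
      (by simp [hvδ0])
      (by simpa using hW0)
      (-r) (by linarith)
    simp only [neg_neg] at key
    linarith
  · have := aux_pos κ δ hκ hδ u v uδ vδ hu hv hv0 huδ hvδ hvδ0 hW0 r hpos
    linarith
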